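/- Let x, g ∈ ℝⁿ, α > 0, and set x⁺ = x − αg. Suppose ‖g − ∇φ(x)‖ ≤ max{ε_g, min{τ, κα}·‖g‖} with ε_g ≤ η‖∇φ(x)‖, and suppose α ≤ min{(1−θ)/(L/2 + κ), 2(1 − 2η − θ(1−η))/(L(1−η))}. Then φ(x⁺) ≤ φ(x) − θα‖g‖². Consequently, for any scalars f, f⁺ with |f − φ(x)| + |f⁺ − φ(x⁺)| ≤ 2ε_f (where ε_f ≥ 0), the sufficient-decrease test f⁺ ≤ f − θα‖g‖² + 2ε_f of the line-search algorithm holds. -/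

import Mathlib

set_option maxHeartbeats 800000

open InnerProductSpace

lemma descent_lemma {n : ℕ} (φ : EuclideanSpace ℝ (Fin n) → ℝ) (L : ℝ) (hL : 0 ≤ L)
    (hdiff : Differentiable ℝ φ)
    (hlip : ∀ y z, ‖gradient φ y - gradient φ z‖ ≤ L * ‖y - z‖)
    (x v : EuclideanSpace ℝ (Fin n)) :
    φ (x + v) ≤ φ x + inner ℝ (gradient φ x) v + L / 2 * ‖v‖ ^ 2 := by
  set c : ℝ := inner ℝ (gradient φ x) v with hc
  set ψ : ℝ → ℝ := fun t => φ (x + t • v) - c * t - (L / 2 * ‖v‖ ^ 2) * t ^ 2 with hψdef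
  have hline : ∀ t : ℝ, HasDerivAt (fun s : ℝ => x + s • v) v t := fun t => by
    simpa using ((hasDerivAt_id t).smul_const v).const_add x
  have hφd : ∀ t : ℝ, HasDerivAt (fun s : ℝ => φ (x + s • v))
      (inner ℝ (gradient φ (x + t • v)) v : ℝ) t := fun t => by
    have h1 : HasFDerivAt φ (toDual ℝ _ (gradient φ (x + t • v))) (x + t • v) :=
      (hdiff (x + t • v)).hasGradientAt
    exact h1.comp_hasDerivAt t (hline t)
  have hψd : ∀ t : ℝ, HasDerivAt ψ
      ((inner ℝ (gradient φ (x + t • v)) v : ℝ) - c - (L / 2 * ‖v‖ ^ 2) * (2 * t)) t := fun t => by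
    have h2 : HasDerivAt (fun s : ℝ => c * s) c t := by
      simpa using (hasDerivAt_id t).const_mul c
    have h3 : HasDerivAt (fun s : ℝ => (L / 2 * ‖v‖ ^ 2) * s ^ 2)
        ((L / 2 * ‖v‖ ^ 2) * (2 * t)) t := by
      simpa [mul_comm] using ((hasDerivAt_pow 2 t).const_mul (L / 2 * ‖v‖ ^ 2))
    exact ((hφd t).sub h2).sub h3
  have hanti : AntitoneOn ψ (Set.Icc 0 1) := by
    apply antitoneOn_of_deriv_nonpos (convex_Icc 0 1)
    · exact Continuous.continuousOn (by
        have := hdiff.continuous; rw [hψdef]; fun_prop)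
    · intro t ht
      exact ((hψd t).differentiableAt).differentiableWithinAt
    · intro t ht
      rw [interior_Icc] at ht
      rw [(hψd t).deriv]
      have hb : (inner ℝ (gradient φ (x + t • v)) v : ℝ) - c ≤ L * t * ‖v‖ ^ 2 := by
        have h4 : (inner ℝ (gradient φ (x + t • v)) v : ℝ) - c
            = inner ℝ (gradient φ (x + t • v) - gradient φ x) v := by
          rw [inner_sub_left]
        rw [h4]
        calc (inner ℝ (gradient φ (x + t • v) - gradient φ x) v : ℝ)
            ≤ ‖gradient φ (x + t • v) - gradient φ x‖ * ‖v‖ := real_inner_le_norm _ _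
          _ ≤ (L * ‖(x + t • v) - x‖) * ‖v‖ :=
              mul_le_mul_of_nonneg_right (hlip _ _) (norm_nonneg v)
          _ = L * t * ‖v‖ ^ 2 := by
              simp [norm_smul, abs_of_pos ht.1]; ring
      nlinarith [sq_nonneg ‖v‖, ht.1.le]
  have := hanti (Set.mem_Icc.2 ⟨le_refl 0, zero_le_one⟩) (Set.mem_Icc.2 ⟨zero_le_one, le_refl 1⟩) zero_le_one
  simp only [hψdef] at this
  simp at this
  linarith

/-- Every true and small iteration of the stochastic line-search method satisfies the
sufficient-decrease acceptance test. -/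
theorem line_search_small_true_sufficient_decrease
    (n : ℕ) (φ : EuclideanSpace ℝ (Fin n) → ℝ) (L : ℝ) (hL : 0 < L)
    (hdiff : Differentiable ℝ φ)
    (hlip : ∀ y z, ‖gradient φ y - gradient φ z‖ ≤ L * ‖y - z‖)
    (θ κ τ εg εf η : ℝ)
    (hθ : θ ∈ Set.Ioo (0 : ℝ) 1) (hκ : 0 ≤ κ) (hτ : 0 ≤ τ) (hεg : 0 ≤ εg)
    (hεf : 0 ≤ εf) (hη : 0 < η) (hη' : η < (1 - θ) / (2 - θ))
    (x g : EuclideanSpace ℝ (Fin n)) (α : ℝ) (hα : 0 < α)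
    (hacc : ‖g - gradient φ x‖ ≤ max εg (min τ (κ * α) * ‖g‖))
    (hεgb : εg ≤ η * ‖gradient φ x‖)
    (hαb : α ≤ min ((1 - θ) / (L / 2 + κ)) (2 * (1 - 2 * η - θ * (1 - η)) / (L * (1 - η)))) :
    φ (x - α • g) ≤ φ x - θ * α * ‖g‖ ^ 2 ∧
    ∀ f fp : ℝ, |f - φ x| + |fp - φ (x - α • g)| ≤ 2 * εf →
      fp ≤ f - θ * α * ‖g‖ ^ 2 + 2 * εf := by
  obtain ⟨hθ0, hθ1⟩ := hθ
  have hη2 : η < 1 / 2 := by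
    have h2θ : (0:ℝ) < 2 - θ := by linarith
    have : (1 - θ) / (2 - θ) < 1 / 2 := by
      rw [div_lt_div_iff₀ h2θ (by norm_num)]; linarith
    linarith
  have hη1 : η < 1 := by linarith
  have key : φ (x - α • g) ≤ φ x - θ * α * ‖g‖ ^ 2 := by
    have hdes := descent_lemma φ L hL.le hdiff hlip x (-(α • g))
    have hxy : x + -(α • g) = x - α • g := by abel
    rw [hxy] at hdes
    have hinner : (inner ℝ (gradient φ x) (-(α • g)) : ℝ)
        = -α * (‖g‖ ^ 2 - inner ℝ (g - gradient φ x) g) := by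
      rw [inner_neg_right, real_inner_smul_right, inner_sub_left,
        real_inner_self_eq_norm_sq]
      ring
    have hnv : ‖-(α • g)‖ ^ 2 = α ^ 2 * ‖g‖ ^ 2 := by
      rw [norm_neg, norm_smul, Real.norm_eq_abs, abs_of_pos hα, mul_pow]
    rw [hinner, hnv] at hdes
    -- bound the error inner product
    have herr : (inner ℝ (g - gradient φ x) g : ℝ) ≤ ‖g - gradient φ x‖ * ‖g‖ :=
      real_inner_le_norm _ _
    -- it suffices to show the error-plus-curvature bound
    have hmain : ‖g - gradient φ x‖ * ‖g‖ + L * α / 2 * ‖g‖ ^ 2 ≤ (1 - θ) * ‖g‖ ^ 2 := by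
      rcases max_cases εg (min τ (κ * α) * ‖g‖) with ⟨hmax, _⟩ | ⟨hmax, _⟩
      · -- true iteration: error ≤ εg ≤ η ‖∇φ x‖
        rw [hmax] at hacc
        have hgx : ‖gradient φ x‖ ≤ ‖g‖ + ‖g - gradient φ x‖ := by
          have h1 := norm_sub_le g (g - gradient φ x)
          have h2 : g - (g - gradient φ x) = gradient φ x := by abel
          rw [h2] at h1
          exact h1
        have he : ‖g - gradient φ x‖ ≤ η / (1 - η) * ‖g‖ := by
          have h1 : ‖g - gradient φ x‖ ≤ η * (‖g‖ + ‖g - gradient φ x‖) := by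
            calc ‖g - gradient φ x‖ ≤ εg := hacc
              _ ≤ η * ‖gradient φ x‖ := hεgb
              _ ≤ η * (‖g‖ + ‖g - gradient φ x‖) := by
                  exact mul_le_mul_of_nonneg_left hgx hη.le
          rw [div_mul_eq_mul_div, le_div_iff₀ (by linarith)]
          nlinarith
        have hα2 : α ≤ 2 * (1 - 2 * η - θ * (1 - η)) / (L * (1 - η)) :=
          le_trans hαb (min_le_right _ _)
        have hLα : L * α / 2 ≤ (1 - 2 * η - θ * (1 - η)) / (1 - η) := by
          rw [le_div_iff₀ (by linarith)]
          have hLη : 0 < L * (1 - η) := mul_pos hL (by linarith)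
          rw [le_div_iff₀ hLη] at hα2
          nlinarith
        have hfrac : η / (1 - η) + (1 - 2 * η - θ * (1 - η)) / (1 - η) = 1 - θ := by
          rw [← add_div, eq_comm, eq_div_iff (by linarith : (1:ℝ) - η ≠ 0)]
          ring
        have h2 : ‖g - gradient φ x‖ * ‖g‖ ≤ η / (1 - η) * ‖g‖ ^ 2 := by
          nlinarith [norm_nonneg g]
        nlinarith [sq_nonneg ‖g‖]
      · -- small iteration: error ≤ κ α ‖g‖
        rw [hmax] at hacc
        have he : ‖g - gradient φ x‖ ≤ κ * α * ‖g‖ := by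
          calc ‖g - gradient φ x‖ ≤ min τ (κ * α) * ‖g‖ := hacc
            _ ≤ κ * α * ‖g‖ := mul_le_mul_of_nonneg_right (min_le_right _ _) (norm_nonneg _)
        have hα1 : α ≤ (1 - θ) / (L / 2 + κ) := le_trans hαb (min_le_left _ _)
        have hden : (0:ℝ) < L / 2 + κ := by linarith
        rw [le_div_iff₀ hden] at hα1
        have h2 : ‖g - gradient φ x‖ * ‖g‖ ≤ κ * α * ‖g‖ ^ 2 := by
          nlinarith [norm_nonneg g]
        nlinarith [sq_nonneg ‖g‖]
    nlinarith [herr, sq_nonneg ‖g‖]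
  refine ⟨key, fun f fp habs => ?_⟩
  have h1 := le_abs_self (f - φ x)
  have h2 := le_abs_self (fp - φ (x - α • g))
  have h3 := neg_abs_le (f - φ x)
  have h4 := abs_nonneg (fp - φ (x - α • g))
  have h5 := abs_nonneg (f - φ x)
  linarith
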